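/- A set of q edges in a simple graph contains at most (√2/3)·q^{3/2} triangles, i.e., at most that many 3-element node sets all of whose three pairwise edges lie in the set. -/

import Mathlib

open Finset

/-- A set of `q` edges (unordered pairs of distinct nodes) contains at most
`(√2/3)·q^{3/2}` triangles: 3-element node sets all of whose pairwise edges
lie in the set. -/
theorem triangle_count_bound {V : Type} [Fintype V] [DecidableEq V]
    (E : Finset (Sym2 V)) (hE : ∀ e ∈ E, ¬ e.IsDiag) (q : ℕ) (hq : E.card = q) :
    (((Finset.univ : Finset (Finset V)).filter
        (fun T => T.card = 3 ∧ ∀ u ∈ T, ∀ v ∈ T, u ≠ v → s(u, v) ∈ E)).card : ℝ)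
      ≤ Real.sqrt 2 / 3 * (q : ℝ) ^ ((3 : ℝ) / 2) := by
  classical
  set 𝒯 := ((Finset.univ : Finset (Finset V)).filter
      (fun T => T.card = 3 ∧ ∀ u ∈ T, ∀ v ∈ T, u ≠ v → s(u, v) ∈ E)) with h𝒯
  have hTmem : ∀ T ∈ 𝒯, T.card = 3 ∧ ∀ u ∈ T, ∀ v ∈ T, u ≠ v → s(u, v) ∈ E := by
    intro T hT
    exact (Finset.mem_filter.mp hT).2
  -- q = 0 case
  rcases Nat.eq_zero_or_pos q with hq0 | hqpos
  · subst hq0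
    have hEe : E = ∅ := Finset.card_eq_zero.mp hq
    have : 𝒯 = ∅ := by
      rw [h𝒯, Finset.filter_eq_empty_iff]
      rintro T - ⟨hc, hall⟩
      obtain ⟨a, ha, b, hb, hab⟩ := Finset.one_lt_card.mp (by omega : 1 < T.card)
      have := hall a ha b hb hab
      simp [hEe] at this
    rw [this]
    simp [Real.zero_rpow (show (3:ℝ)/2 ≠ 0 by norm_num)]
  -- definitions
  set N : V → Finset V := fun w => univ.filter (fun u => u ≠ w ∧ s(w, u) ∈ E) with hN
  set d : V → ℕ := fun w => (N w).card with hd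
  set t : V → ℕ := fun w => (𝒯.filter (fun T => w ∈ T)).card with ht
  -- Sum of degrees = 2q
  have hdeg : ∑ w : V, d w = 2 * q := by
    have h1 : ∀ w : V, d w = (E.filter (fun e => w ∈ e)).card := by
      intro w
      refine Finset.card_nbij (fun u => s(w, u)) ?_ ?_ ?_
      · intro u hu
        simp only [hN, Finset.mem_coe, Finset.mem_filter, Finset.mem_univ, true_and] at hu
        simp [Finset.mem_filter, hu.2]
      · intro u hu v hv h
        exact Sym2.congr_right.mp h
      · intro e he
        simp only [Finset.coe_filter, Set.mem_setOf_eq] at he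
        obtain ⟨u, rfl⟩ := Sym2.mem_iff_exists.mp he.2
        have hne : u ≠ w := fun h => hE _ he.1 (Sym2.mk_isDiag_iff.mpr h.symm)
        refine ⟨u, ?_, rfl⟩
        simp [hN, hne, he.1]
    calc ∑ w : V, d w = ∑ w : V, ∑ e ∈ E, if w ∈ e then 1 else 0 := by
          simp_rw [h1, Finset.card_filter]
      _ = ∑ e ∈ E, ∑ w : V, if w ∈ e then 1 else 0 := Finset.sum_comm
      _ = ∑ e ∈ E, (univ.filter (fun w => w ∈ e)).card := by simp_rw [Finset.card_filter]
      _ = ∑ e ∈ E, 2 := by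
          refine Finset.sum_congr rfl (fun e he => ?_)
          induction e using Sym2.inductionOn with
          | hf a b =>
            have hab : a ≠ b := fun h => hE _ he (Sym2.mk_isDiag_iff.mpr h)
            have : univ.filter (fun w => w ∈ s(a, b)) = {a, b} := by
              ext w; simp [Sym2.mem_iff]
            rw [this, Finset.card_insert_of_notMem (by simp [hab]), Finset.card_singleton]
      _ = 2 * q := by rw [Finset.sum_const, hq]; ring
  -- Sum of t = 3 * |𝒯|
  have htsum : ∑ w : V, t w = 3 * 𝒯.card := by
    calc ∑ w : V, t w = ∑ w : V, ∑ T ∈ 𝒯, if w ∈ T then 1 else 0 := by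
          simp_rw [ht, Finset.card_filter]
      _ = ∑ T ∈ 𝒯, ∑ w : V, if w ∈ T then 1 else 0 := Finset.sum_comm
      _ = ∑ T ∈ 𝒯, T.card := by
          refine Finset.sum_congr rfl (fun T hT => ?_)
          rw [← Finset.card_filter, Finset.filter_univ_mem]
      _ = ∑ T ∈ 𝒯, 3 := Finset.sum_congr rfl (fun T hT => (hTmem T hT).1)
      _ = 3 * 𝒯.card := by rw [Finset.sum_const]; ring
  -- t w ≤ q
  have htq : ∀ w : V, t w ≤ q := by
    intro w
    rw [← hq, ht]
    refine Finset.card_le_card_of_surjOn (fun e => insert w (univ.filter (fun u => u ∈ e))) ?_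
    intro T hT
    simp only [Finset.coe_filter, Set.mem_setOf_eq] at hT
    obtain ⟨hT𝒯, hwT⟩ := hT
    obtain ⟨hc3, hall⟩ := hTmem T hT𝒯
    have hce : (T.erase w).card = 2 := by rw [Finset.card_erase_of_mem hwT, hc3]
    obtain ⟨u, v, huv, heq⟩ := Finset.card_eq_two.mp hce
    have hu : u ∈ T.erase w := by rw [heq]; simp
    have hv : v ∈ T.erase w := by rw [heq]; simp
    have huT := Finset.mem_of_mem_erase hu
    have hvT := Finset.mem_of_mem_erase hv
    have he : s(u, v) ∈ E := hall u huT v hvT huv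
    refine ⟨s(u, v), he, ?_⟩
    have : univ.filter (fun x => x ∈ s(u, v)) = {u, v} := by
      ext x; simp [Sym2.mem_iff]
    simp only [this]
    rw [← heq, Finset.insert_erase hwT]
  -- 2 * t w ≤ d w * d w
  have htd : ∀ w : V, 2 * t w ≤ d w * d w := by
    intro w
    have h1 : t w ≤ (d w).choose 2 := by
      rw [ht, hd, ← Finset.card_powersetCard]
      refine Finset.card_le_card_of_injOn (fun T => T.erase w) ?_ ?_
      · intro T hT
        simp only [Finset.mem_coe, Finset.mem_filter] at hT ⊢
        obtain ⟨hT𝒯, hwT⟩ := hT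
        obtain ⟨hc3, hall⟩ := hTmem T hT𝒯
        rw [Finset.mem_powersetCard]
        constructor
        · intro u hu
          have huT := Finset.mem_of_mem_erase hu
          have hne : u ≠ w := Finset.ne_of_mem_erase hu
          simp only [hN, Finset.mem_filter, Finset.mem_univ, true_and]
          exact ⟨hne, hall w hwT u huT (Ne.symm hne)⟩
        · rw [Finset.card_erase_of_mem hwT, hc3]
      · intro T hT T' hT' h
        simp only [Finset.coe_filter, Set.mem_setOf_eq] at hT hT'
        have := congrArg (insert w) h
        rwa [Finset.insert_erase hT.2, Finset.insert_erase hT'.2] at this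
    calc 2 * t w ≤ 2 * (d w).choose 2 := by omega
      _ = d w * (d w - 1) := by
          rw [Nat.choose_two_right, Nat.two_mul_div_two_of_even (Nat.even_mul_pred_self _)]
      _ ≤ d w * d w := Nat.mul_le_mul_left _ (Nat.sub_le _ _)
  -- the real computation
  have hqpos' : (0:ℝ) < q := by exact_mod_cast hqpos
  have hsq : (0:ℝ) < Real.sqrt q := Real.sqrt_pos.mpr hqpos'
  have key : (3 : ℝ) * 𝒯.card ≤ Real.sqrt 2 * q * Real.sqrt q := by
    have h1 : (3 : ℝ) * 𝒯.card = ∑ w : V, (t w : ℝ) := by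
      rw [← Nat.cast_sum, htsum]; push_cast; ring
    have h2 : ∀ w : V, (t w : ℝ) ≤ (d w : ℝ) * (Real.sqrt q / Real.sqrt 2) := by
      intro w
      have ht1 : (t w : ℝ) ≤ q := by exact_mod_cast htq w
      have ht2 : 2 * (t w : ℝ) ≤ (d w : ℝ) * d w := by exact_mod_cast htd w
      have htnn : (0:ℝ) ≤ t w := Nat.cast_nonneg _
      have hdnn : (0:ℝ) ≤ d w := Nat.cast_nonneg _
      -- t = sqrt (t * t) ≤ sqrt (q * (d*d/2)) = d * sqrt q / sqrt 2
      have h3 : (t w : ℝ) * t w ≤ q * ((d w : ℝ) * d w / 2) := by nlinarith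
      have hX : (0:ℝ) ≤ (d w : ℝ) * (Real.sqrt q / Real.sqrt 2) := by positivity
      have hsqX : ((d w : ℝ) * (Real.sqrt q / Real.sqrt 2))^2 = q * ((d w : ℝ) * d w / 2) := by
        rw [mul_pow, div_pow, Real.sq_sqrt hqpos'.le, Real.sq_sqrt (by norm_num : (0:ℝ) ≤ 2)]
        ring
      have h4 : (t w : ℝ)^2 ≤ ((d w : ℝ) * (Real.sqrt q / Real.sqrt 2))^2 := by
        rw [hsqX, sq]; exact h3
      calc (t w : ℝ) = Real.sqrt ((t w : ℝ)^2) := (Real.sqrt_sq htnn).symm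
        _ ≤ Real.sqrt (((d w : ℝ) * (Real.sqrt q / Real.sqrt 2))^2) := Real.sqrt_le_sqrt h4
        _ = (d w : ℝ) * (Real.sqrt q / Real.sqrt 2) := Real.sqrt_sq hX
    have h5 : ∑ w : V, (t w : ℝ) ≤ ∑ w : V, (d w : ℝ) * (Real.sqrt q / Real.sqrt 2) :=
      Finset.sum_le_sum (fun w _ => h2 w)
    have h6 : ∑ w : V, (d w : ℝ) * (Real.sqrt q / Real.sqrt 2)
        = (2 * q : ℝ) * (Real.sqrt q / Real.sqrt 2) := by
      rw [← Finset.sum_mul, ← Nat.cast_sum, hdeg]; push_cast; ring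
    have hs2 : Real.sqrt 2 * Real.sqrt 2 = 2 := Real.mul_self_sqrt (by norm_num)
    have hs2pos : (0:ℝ) < Real.sqrt 2 := Real.sqrt_pos.mpr (by norm_num)
    have h7 : (2 * q : ℝ) * (Real.sqrt q / Real.sqrt 2) = Real.sqrt 2 * q * Real.sqrt q := by
      field_simp
      linear_combination (-1:ℝ) * hs2
    rw [h1]
    calc ∑ w : V, (t w : ℝ) ≤ (2 * q : ℝ) * (Real.sqrt q / Real.sqrt 2) := h5.trans h6.le
      _ = Real.sqrt 2 * q * Real.sqrt q := h7
  have hpow : (q : ℝ) ^ ((3 : ℝ) / 2) = q * Real.sqrt q := by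
    rw [show (3:ℝ)/2 = 1 + 1/2 by norm_num, Real.rpow_add hqpos', Real.rpow_one,
      Real.sqrt_eq_rpow]
  rw [hpow]
  have : Real.sqrt 2 / 3 * ((q:ℝ) * Real.sqrt q) = (Real.sqrt 2 * q * Real.sqrt q) / 3 := by ring
  rw [this]
  linarith [key]
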